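/- Let ρ ∈ ℂ with |ρ| < 1 and define z = 4ρ/(1+ρ)². Then z ∉ [1, +∞). Conversely if z ∈ ℂ \ [1, +∞) then ρ = z/(1+√(1-z))² (principal square root) satisfies |ρ| < 1 and 4ρ/(1+ρ)² = z. -/

import Mathlib

/-- If |ρ| < 1 then z = 4ρ/(1+ρ)² is not in [1,∞). Conversely, if
z ∈ ℂ \ [1,∞) then ρ = z/(1+√(1-z))² (principal square root) satisfies |ρ| < 1 and
4ρ/(1+ρ)² = z. -/
theorem stmt_11 :
    (∀ ρ : ℂ, ‖ρ‖ < 1 →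
        ¬((4 * ρ / (1 + ρ) ^ 2).im = 0 ∧ 1 ≤ (4 * ρ / (1 + ρ) ^ 2).re)) ∧
      ∀ z : ℂ, ¬(z.im = 0 ∧ 1 ≤ z.re) →
        ‖z / (1 + (1 - z) ^ ((1 : ℂ) / 2)) ^ 2‖ < 1 ∧
          4 * (z / (1 + (1 - z) ^ ((1 : ℂ) / 2)) ^ 2) /
              (1 + z / (1 + (1 - z) ^ ((1 : ℂ) / 2)) ^ 2) ^ 2 = z := by
  constructor
  · -- forward direction
    rintro ρ hρ ⟨him, hre⟩
    have hns : Complex.normSq ρ < 1 := by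
      have := Complex.sq_norm ρ
      nlinarith [norm_nonneg ρ]
    have h1 : (1 + ρ) ≠ 0 := by
      intro h
      have : ρ = -1 := by linear_combination h
      rw [this] at hρ
      simp at hρ
    set z : ℂ := 4 * ρ / (1 + ρ) ^ 2 with hz
    set u : ℂ := (1 - ρ) / (1 + ρ) with hu
    have hu2 : u ^ 2 = 1 - z := by
      rw [hu, hz]
      field_simp
      ring
    have h1ns : 0 < Complex.normSq (1 + ρ) := by
      simpa using Complex.normSq_pos.mpr h1
    have hure : 0 < u.re := by
      rw [hu, Complex.div_re]
      have : ((1 : ℂ) - ρ).re * (1 + ρ).re + (1 - ρ).im * (1 + ρ).im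
          = 1 - Complex.normSq ρ := by
        simp [Complex.normSq_apply]; ring
      rw [← add_div, this]
      exact div_pos (by linarith) h1ns
    have him' : (u ^ 2).im = 0 := by rw [hu2]; simp [him]
    have hre' : (u ^ 2).re ≤ 0 := by
      rw [hu2]; simp; linarith
    have h2 : (u ^ 2).im = 2 * u.re * u.im := by
      rw [pow_two, Complex.mul_im]; ring
    have h3 : (u ^ 2).re = u.re ^ 2 - u.im ^ 2 := by
      rw [pow_two, Complex.mul_re]; ring
    have huim : u.im = 0 := by
      have := h2 ▸ him'
      nlinarith
    nlinarith [h3 ▸ hre']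
  · -- converse
    intro z hz
    set s : ℂ := (1 - z) ^ ((1 : ℂ) / 2) with hs
    have hw0 : (1 : ℂ) - z ≠ 0 := by
      intro h
      apply hz
      have : z = 1 := by linear_combination -h
      simp [this]
    have hs2 : s ^ 2 = 1 - z := by
      have : ((1 : ℂ) / 2) = (((2 : ℕ) : ℂ))⁻¹ := by norm_num
      rw [hs, this]
      exact Complex.cpow_nat_inv_pow _ two_ne_zero
    -- Re s > 0
    have harg : Complex.arg (1 - z) ≠ Real.pi := by
      intro h
      rcases Complex.arg_eq_pi_iff.mp h with ⟨h1, h2⟩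
      apply hz
      constructor
      · simpa using h2
      · simp [Complex.sub_re] at h1; linarith
    have hsre : 0 < s.re := by
      rw [hs, Complex.cpow_def_of_ne_zero hw0]
      rw [Complex.exp_re]
      have him : (Complex.log (1 - z) * (1 / 2)).im = Complex.arg (1 - z) / 2 := by
        simp [Complex.mul_im, Complex.log_im, Complex.log_re]
        ring
      rw [him]
      have hlt : Complex.arg (1 - z) < Real.pi :=
        lt_of_le_of_ne (Complex.arg_le_pi _) harg
      have hgt : -Real.pi < Complex.arg (1 - z) := Complex.neg_pi_lt_arg _
      have hcos : 0 < Real.cos (Complex.arg (1 - z) / 2) := by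
        apply Real.cos_pos_of_mem_Ioo
        constructor <;> [linarith; linarith]
      positivity
    have h1s : (1 + s) ≠ 0 := by
      intro h
      have : (1 + s).re = 0 := by rw [h]; simp
      simp [Complex.add_re] at this
      linarith
    set ρ : ℂ := z / (1 + s) ^ 2 with hρ
    have hρeq : ρ = (1 - s) / (1 + s) := by
      rw [hρ]
      rw [div_eq_div_iff (pow_ne_zero 2 h1s) h1s]
      linear_combination (1 + s) * hs2
    constructor
    · -- |ρ| < 1
      rw [hρeq]
      rw [norm_div, div_lt_one (norm_pos_iff.mpr h1s)]
      have h2 : ‖1 - s‖ ^ 2 < ‖1 + s‖ ^ 2 := by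
        rw [Complex.sq_norm, Complex.sq_norm, Complex.normSq_apply, Complex.normSq_apply]
        simp [Complex.sub_re, Complex.sub_im, Complex.add_re, Complex.add_im]
        nlinarith
      nlinarith [norm_nonneg (1 - s), norm_nonneg (1 + s)]
    · -- 4ρ/(1+ρ)² = z
      have h1ρ : (1 + ρ) = 2 / (1 + s) := by
        rw [hρeq]
        field_simp
        ring
      have h1ρ0 : (1 + ρ) ≠ 0 := by
        rw [h1ρ]
        exact div_ne_zero two_ne_zero h1s
      rw [div_eq_iff (pow_ne_zero 2 h1ρ0), h1ρ, hρeq, div_pow, ← mul_div_assoc,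
        ← mul_div_assoc, div_eq_div_iff h1s (pow_ne_zero 2 h1s)]
      linear_combination (-4 * (1 + s) : ℂ) * hs2
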